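/- For the ring R = ℤ[t]/(t²−1) with I = (t−1), the short exact sequence of R-modules 0 → I/2I → R/2I → R/I → 0 (given by the inclusion of I/2I into R/2I and the natural quotient map R/2I → R/I) does not split; equivalently, there is no R-linear section of the quotient map R/2I → R/I. -/

import Mathlib

noncomputable section

abbrev R : Type := Polynomial ℤ ⧸ Ideal.span ({Polynomial.X ^ 2 - 1} : Set (Polynomial ℤ))

def t : R := Ideal.Quotient.mk _ Polynomial.X

def I : Ideal R := Ideal.span {t - 1}
def J : Ideal R := Ideal.span {t + 1}

def η : R →+* ℤ :=
  Ideal.Quotient.lift _ (Polynomial.evalRingHom (-1 : ℤ)) (by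
    intro a ha
    rw [Ideal.mem_span_singleton] at ha
    obtain ⟨c, rfl⟩ := ha
    simp)

lemma η_t : η t = -1 := by
  simp [η, t]

theorem RmodTwoI_to_RmodI_no_section :
    ¬ ∃ s : (R ⧸ I) →ₗ[R] (R ⧸ (Ideal.span ({2} : Set R) * I)),
      (Submodule.mapQ (Ideal.span ({2} : Set R) * I) I LinearMap.id
          (by rw [Submodule.comap_id]; exact Ideal.mul_le_right)) ∘ₗ s
        = LinearMap.id := by
  rintro ⟨s, hs⟩
  -- x := s (mk 1)
  obtain ⟨x, hx⟩ := Ideal.Quotient.mk_surjective (I := Ideal.span ({2} : Set R) * I)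
    (s (Submodule.Quotient.mk 1))
  -- x ≡ 1 mod I
  have h1 : (Submodule.Quotient.mk x : R ⧸ I) = Submodule.Quotient.mk 1 := by
    have := congrArg (fun f => f (Submodule.Quotient.mk (1 : R) : R ⧸ I)) hs
    simp only [LinearMap.comp_apply, LinearMap.id_apply] at this
    rw [← hx] at this
    simpa [Submodule.mapQ_apply] using this
  have h1' : x - 1 ∈ I := (Submodule.Quotient.eq I).mp h1
  -- (t-1) * x ∈ 2I
  have h2 : (t - 1) * x ∈ Ideal.span ({2} : Set R) * I := by
    have h0 : (t - 1) • (Submodule.Quotient.mk (1 : R) : R ⧸ I) = 0 := by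
      rw [← Submodule.Quotient.mk_smul, smul_eq_mul, mul_one,
        Submodule.Quotient.mk_eq_zero]
      exact Ideal.mem_span_singleton_self _
    have := map_smul s (t - 1) (Submodule.Quotient.mk 1)
    rw [h0, map_zero, ← hx] at this
    have e : (t - 1) • (Ideal.Quotient.mk (Ideal.span ({2} : Set R) * I) x)
        = Ideal.Quotient.mk _ ((t - 1) * x) := rfl
    rw [e] at this
    exact (Ideal.Quotient.eq_zero_iff_mem).mp this.symm
  -- push through η
  rw [I, Ideal.mem_span_singleton] at h1'
  rw [I, Ideal.span_singleton_mul_span_singleton, Ideal.mem_span_singleton] at h2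
  obtain ⟨a, ha⟩ := h1'
  obtain ⟨b, hb⟩ := h2
  have e1 : η x - 1 = -2 * η a := by
    have := congrArg η ha
    simp only [map_sub, map_mul, map_one, η_t] at this
    linarith [this]
  have e2 : -2 * η x = -4 * η b := by
    have := congrArg η hb
    simp only [map_sub, map_mul, map_one, map_ofNat, η_t] at this
    linarith [this]
  omega
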